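/- arXiv:0802.2741 — 5 statements merged into one kernel-verified Lean document; each statement's English description precedes it below -/
import Mathlib

section
/- Let ψ = (P,Q) : ℝ^m → ℝ² be real analytic on an open neighborhood U of 0 with ψ(0) = 0 and having an isolated critical point at 0. Then for every ε > 0 such that the closed ball of radius ε is contained in U, there exists M > 0 such that for all x with ‖x‖ = ε and ψ(x) ≠ 0, ‖P(x)∇P(x) + Q(x)∇Q(x)‖ ≤ M · ‖P(x)∇Q(x) − Q(x)∇P(x)‖. -/
open scoped RealInnerProductSpace

noncomputable section

/-- Let `ψ = (P,Q)` be real analytic on an open neighborhood `U` of `0` with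
`ψ(0) = 0` and isolated critical point at `0`. Then for every `ε > 0` with the closed ball
of radius `ε` contained in `U`, there is `M > 0` such that for all `x` with `‖x‖ = ε` and
`ψ(x) ≠ 0`, `‖P(x)∇P(x) + Q(x)∇Q(x)‖ ≤ M·‖P(x)∇Q(x) − Q(x)∇P(x)‖`. -/
theorem stmt_3 {m : ℕ} (P Q : EuclideanSpace ℝ (Fin m) → ℝ)
    (U : Set (EuclideanSpace ℝ (Fin m))) (hUopen : IsOpen U)
    (hU0 : (0 : EuclideanSpace ℝ (Fin m)) ∈ U)
    (hP0 : P 0 = 0) (hQ0 : Q 0 = 0)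
    (hanal : AnalyticOnNhd ℝ (fun x => ((P x, Q x) : ℝ × ℝ)) U)
    (hreg : ∀ x ∈ U \ {(0 : EuclideanSpace ℝ (Fin m))},
      Function.Surjective (fderiv ℝ (fun y => ((P y, Q y) : ℝ × ℝ)) x)) :
    ∀ ε > 0, Metric.closedBall (0 : EuclideanSpace ℝ (Fin m)) ε ⊆ U →
      ∃ M > 0, ∀ x : EuclideanSpace ℝ (Fin m), ‖x‖ = ε → ¬(P x = 0 ∧ Q x = 0) →
        ‖P x • gradient P x + Q x • gradient Q x‖ ≤
          M * ‖P x • gradient Q x - Q x • gradient P x‖ := by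
  intro ε hε hball
  -- analyticity of the components
  have hPa : AnalyticOnNhd ℝ P U := fun x hx => analyticAt_fst.comp (hanal x hx)
  have hQa : AnalyticOnNhd ℝ Q U := fun x hx => analyticAt_snd.comp (hanal x hx)
  have hPd : ∀ x ∈ U, DifferentiableAt ℝ P x := fun x hx => (hPa x hx).differentiableAt
  have hQd : ∀ x ∈ U, DifferentiableAt ℝ Q x := fun x hx => (hQa x hx).differentiableAt
  -- inner product characterization of the gradient
  have hgi : ∀ (f : EuclideanSpace ℝ (Fin m) → ℝ) (x v : EuclideanSpace ℝ (Fin m)), ⟪gradient f x, v⟫ = fderiv ℝ f x v := by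
    intro f x v
    exact InnerProductSpace.toDual_symm_apply
  -- fderiv of the pair
  have hpair : ∀ x ∈ U, fderiv ℝ (fun y => ((P y, Q y) : ℝ × ℝ)) x
      = (fderiv ℝ P x).prod (fderiv ℝ Q x) := fun x hx =>
    HasFDerivAt.fderiv (HasFDerivAt.prodMk ((hPd x hx).hasFDerivAt) ((hQd x hx).hasFDerivAt))
  -- linear independence of the gradients at regular points
  have hinj : ∀ x ∈ U \ {(0 : EuclideanSpace ℝ (Fin m))}, ∀ a b : ℝ,
      a • gradient P x + b • gradient Q x = 0 → a = 0 ∧ b = 0 := by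
    intro x hx a b hab
    obtain ⟨v, hv⟩ := hreg x hx ((a, b) : ℝ × ℝ)
    rw [hpair x hx.1] at hv
    have hv1 : fderiv ℝ P x v = a := congrArg Prod.fst hv
    have hv2 : fderiv ℝ Q x v = b := congrArg Prod.snd hv
    have h0 : ⟪a • gradient P x + b • gradient Q x, v⟫ = 0 := by
      rw [hab]; simp
    rw [inner_add_left, real_inner_smul_left, real_inner_smul_left, hgi, hgi, hv1, hv2] at h0
    constructor <;> nlinarith [sq_nonneg a, sq_nonneg b]
  -- continuity of the gradients on U
  have hgc : ∀ f : EuclideanSpace ℝ (Fin m) → ℝ, AnalyticOnNhd ℝ f U → ContinuousOn (fun x => gradient f x) U := by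
    intro f hf
    have h1 : ContinuousOn (fderiv ℝ f) U := (hf.fderiv).continuousOn
    exact ((InnerProductSpace.toDual ℝ (EuclideanSpace ℝ (Fin m))).symm.continuous.comp_continuousOn h1 : _)
  have hgPc := hgc P hPa
  have hgQc := hgc Q hQa
  -- the sphere
  set K := Metric.sphere (0 : EuclideanSpace ℝ (Fin m)) ε with hK
  have hKsub : ∀ x ∈ K, x ∈ U \ {(0 : EuclideanSpace ℝ (Fin m))} := by
    intro x hx
    rw [hK] at hx
    have hxn : ‖x‖ = ε := by simpa using hx
    refine ⟨hball (by simp only [Metric.mem_closedBall, dist_zero_right, hxn]; exact le_refl ε), ?_⟩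
    simp only [Set.mem_singleton_iff]
    intro h; rw [h] at hxn; simp at hxn; exact absurd hxn.symm (ne_of_gt hε)
  by_cases hne : K.Nonempty
  swap
  · refine ⟨1, one_pos, fun x hx _ => ?_⟩
    exact absurd ⟨x, by simp [hK, hx]⟩ hne
  have hKc : IsCompact K := isCompact_sphere 0 ε
  -- upper bound C
  have hgsum : ContinuousOn (fun x => ‖gradient P x‖ + ‖gradient Q x‖) U :=
    (hgPc.norm).add (hgQc.norm)
  obtain ⟨x₀, hx₀K, hx₀max⟩ := hKc.exists_isMaxOn hne
    (hgsum.mono (fun x hx => (hKsub x hx).1))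
  set C := ‖gradient P x₀‖ + ‖gradient Q x₀‖ with hC
  have hCb : ∀ x ∈ K, ‖gradient P x‖ + ‖gradient Q x‖ ≤ C := fun x hx => hx₀max hx
  have hCnn : 0 ≤ C := le_trans (by positivity) (hCb x₀ hx₀K)
  -- lower bound c via compactness of K × unit sphere
  set K2 := K ×ˢ Metric.sphere (0 : ℝ × ℝ) 1 with hK2
  have hK2c : IsCompact K2 := hKc.prod (isCompact_sphere 0 1)
  have hK2ne : K2.Nonempty := ⟨(hne.some, ((1 : ℝ), (0 : ℝ))), hne.some_mem,
    by simp [Prod.norm_def]⟩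
  set F : EuclideanSpace ℝ (Fin m) × (ℝ × ℝ) → ℝ := fun p => ‖p.2.1 • gradient P p.1 + p.2.2 • gradient Q p.1‖ with hF
  have hFc : ContinuousOn F K2 := by
    apply ContinuousOn.norm
    have h1 : ContinuousOn (fun p : EuclideanSpace ℝ (Fin m) × (ℝ × ℝ) => gradient P p.1) K2 := by
      exact hgPc.comp continuous_fst.continuousOn (fun p hp => (hKsub p.1 hp.1).1)
    have h2 : ContinuousOn (fun p : EuclideanSpace ℝ (Fin m) × (ℝ × ℝ) => gradient Q p.1) K2 := by
      exact hgQc.comp continuous_fst.continuousOn (fun p hp => (hKsub p.1 hp.1).1)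
    exact ((continuous_snd.fst.continuousOn).smul h1).add
      ((continuous_snd.snd.continuousOn).smul h2)
  obtain ⟨p₀, hp₀K, hp₀min⟩ := hK2c.exists_isMinOn hK2ne hFc
  set c := F p₀ with hc
  have hcpos : 0 < c := by
    rcases hp₀K with ⟨hp1, hp2⟩
    rcases lt_or_eq_of_le (norm_nonneg _ : (0:ℝ) ≤ F p₀) with h | h
    · exact h
    · exfalso
      have h0 : p₀.2.1 • gradient P p₀.1 + p₀.2.2 • gradient Q p₀.1 = 0 :=
        norm_eq_zero.mp h.symm
      obtain ⟨ha, hb⟩ := hinj p₀.1 (hKsub p₀.1 hp1) p₀.2.1 p₀.2.2 h0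
      have : ‖p₀.2‖ = 1 := by simpa using hp2
      rw [Prod.norm_def, ha, hb] at this
      simp at this
  -- scaled lower bound
  have hlow : ∀ x ∈ K, ∀ a b : ℝ,
      c * ‖((a, b) : ℝ × ℝ)‖ ≤ ‖a • gradient P x + b • gradient Q x‖ := by
    intro x hx a b
    rcases eq_or_ne ((a, b) : ℝ × ℝ) 0 with h0 | h0
    · rw [h0]; simp
    · set r := ‖((a, b) : ℝ × ℝ)‖ with hr
      have hrpos : 0 < r := norm_pos_iff.mpr h0
      have hw : ((r⁻¹ * a, r⁻¹ * b) : ℝ × ℝ) ∈ Metric.sphere (0 : ℝ × ℝ) 1 := by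
        have : ((r⁻¹ * a, r⁻¹ * b) : ℝ × ℝ) = r⁻¹ • ((a, b) : ℝ × ℝ) := by
          simp [Prod.smul_mk, smul_eq_mul]
        simp only [Metric.mem_sphere, dist_zero_right, this, norm_smul]
        rw [norm_inv, Real.norm_eq_abs, abs_of_pos hrpos, ← hr, inv_mul_cancel₀ hrpos.ne']
      have hmem : ((x, ((r⁻¹ * a, r⁻¹ * b) : ℝ × ℝ)) : EuclideanSpace ℝ (Fin m) × (ℝ × ℝ)) ∈ K2 := ⟨hx, hw⟩
      have hle : c ≤ F ((x, ((r⁻¹ * a, r⁻¹ * b) : ℝ × ℝ))) := hp₀min hmem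
      have heq : F (x, ((r⁻¹ * a, r⁻¹ * b) : ℝ × ℝ))
          = r⁻¹ * ‖a • gradient P x + b • gradient Q x‖ := by
        simp only [hF]
        rw [show (r⁻¹ * a) • gradient P x + (r⁻¹ * b) • gradient Q x
            = r⁻¹ • (a • gradient P x + b • gradient Q x) by
          rw [smul_add, smul_smul, smul_smul]]
        rw [norm_smul, norm_inv, Real.norm_eq_abs, abs_of_pos hrpos]
      rw [heq] at hle
      calc c * r ≤ (r⁻¹ * ‖a • gradient P x + b • gradient Q x‖) * r := by
            exact mul_le_mul_of_nonneg_right hle hrpos.le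
        _ = ‖a • gradient P x + b • gradient Q x‖ := by
            field_simp
  -- the final bound
  refine ⟨(C + 1) / c, by positivity, fun x hxε _ => ?_⟩
  have hxK : x ∈ K := by simp [hK, hxε]
  -- upper bound on numerator
  have hup : ‖P x • gradient P x + Q x • gradient Q x‖
      ≤ C * ‖((P x, Q x) : ℝ × ℝ)‖ := by
    calc ‖P x • gradient P x + Q x • gradient Q x‖
        ≤ ‖P x • gradient P x‖ + ‖Q x • gradient Q x‖ := norm_add_le _ _
      _ = |P x| * ‖gradient P x‖ + |Q x| * ‖gradient Q x‖ := by
          rw [norm_smul, norm_smul, Real.norm_eq_abs, Real.norm_eq_abs]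
      _ ≤ ‖((P x, Q x) : ℝ × ℝ)‖ * ‖gradient P x‖
          + ‖((P x, Q x) : ℝ × ℝ)‖ * ‖gradient Q x‖ := by
          have h1 : |P x| ≤ ‖((P x, Q x) : ℝ × ℝ)‖ := by
            rw [Prod.norm_def]; exact le_max_of_le_left (le_of_eq (Real.norm_eq_abs _).symm)
          have h2 : |Q x| ≤ ‖((P x, Q x) : ℝ × ℝ)‖ := by
            rw [Prod.norm_def]; exact le_max_of_le_right (le_of_eq (Real.norm_eq_abs _).symm)
          gcongr <;> positivity
      _ = (‖gradient P x‖ + ‖gradient Q x‖) * ‖((P x, Q x) : ℝ × ℝ)‖ := by ring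
      _ ≤ C * ‖((P x, Q x) : ℝ × ℝ)‖ := by
          exact mul_le_mul_of_nonneg_right (hCb x hxK) (norm_nonneg _)
  -- lower bound on denominator
  have hden : c * ‖((P x, Q x) : ℝ × ℝ)‖
      ≤ ‖P x • gradient Q x - Q x • gradient P x‖ := by
    have h := hlow x hxK (-(Q x)) (P x)
    have hnorm : ‖((-(Q x), P x) : ℝ × ℝ)‖ = ‖((P x, Q x) : ℝ × ℝ)‖ := by
      rw [Prod.norm_def, Prod.norm_def]
      simp [max_comm]
    have heq : (-(Q x)) • gradient P x + P x • gradient Q x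
        = P x • gradient Q x - Q x • gradient P x := by
      rw [neg_smul]; abel
    rw [hnorm, heq] at h
    exact h
  calc ‖P x • gradient P x + Q x • gradient Q x‖
      ≤ C * ‖((P x, Q x) : ℝ × ℝ)‖ := hup
    _ ≤ (C + 1) * ‖((P x, Q x) : ℝ × ℝ)‖ := by
        exact mul_le_mul_of_nonneg_right (by linarith) (norm_nonneg _)
    _ = ((C + 1) / c) * (c * ‖((P x, Q x) : ℝ × ℝ)‖) := by
        field_simp
    _ ≤ ((C + 1) / c) * ‖P x • gradient Q x - Q x • gradient P x‖ := by
        exact mul_le_mul_of_nonneg_left hden (by positivity)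
end
end

section
/- Let P, Q : ℝ^m → ℝ be differentiable at x with x ≠ 0, (P(x), Q(x)) ≠ (0,0), and ∇P(x), ∇Q(x) linearly independent. Let 0 < ρ ≤ 1 and let θ ∈ ℝ satisfy cos θ · P(x) = sin θ · Q(x) and |⟨∇Ψ_θ(x), x⟩| ≤ (1−ρ)·‖∇Ψ_θ(x)‖·‖x‖, where ∇Ψ_θ(x) = cos θ · ∇P(x) − sin θ · ∇Q(x). Then γ(x) := P(x)∇Q(x) − Q(x)∇P(x) satisfies |⟨γ(x), x⟩| ≤ (1−ρ)·‖γ(x)‖·‖x‖, and γ(x) is not a scalar multiple of x. -/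
open scoped RealInnerProductSpace

/-- Under the hypotheses of the uniform (m)-condition at `x` for the angle `θ`
with `cos θ · P(x) = sin θ · Q(x)`, the vector `γ(x) := P(x)∇Q(x) − Q(x)∇P(x)` satisfies
`|⟪γ(x), x⟫| ≤ (1−ρ)·‖γ(x)‖·‖x‖`, and `γ(x)` is not a scalar multiple of `x`. -/
theorem stmt_6 {m : ℕ} (P Q : EuclideanSpace ℝ (Fin m) → ℝ) (x : EuclideanSpace ℝ (Fin m))
    (hP : DifferentiableAt ℝ P x) (hQ : DifferentiableAt ℝ Q x)
    (hx : x ≠ 0) (hpq : (P x, Q x) ≠ (0, 0))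
    (hli : LinearIndependent ℝ ![gradient P x, gradient Q x])
    (ρ : ℝ) (hρ0 : 0 < ρ) (hρ1 : ρ ≤ 1) (θ : ℝ)
    (hθ : Real.cos θ * P x = Real.sin θ * Q x)
    (hang : |⟪Real.cos θ • gradient P x - Real.sin θ • gradient Q x, x⟫| ≤
      (1 - ρ) * ‖Real.cos θ • gradient P x - Real.sin θ • gradient Q x‖ * ‖x‖) :
    |⟪P x • gradient Q x - Q x • gradient P x, x⟫| ≤
      (1 - ρ) * ‖P x • gradient Q x - Q x • gradient P x‖ * ‖x‖ ∧
    ¬∃ c : ℝ, P x • gradient Q x - Q x • gradient P x = c • x := by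
  set gP := gradient P x
  set gQ := gradient Q x
  set Ψ := Real.cos θ • gP - Real.sin θ • gQ with hΨ
  set γ := P x • gQ - Q x • gP with hγdef
  -- find t with P x = t * sin θ, Q x = t * cos θ
  obtain ⟨t, htP, htQ⟩ : ∃ t : ℝ, P x = t * Real.sin θ ∧ Q x = t * Real.cos θ := by
    by_cases hc : Real.cos θ = 0
    · have hs : Real.sin θ ≠ 0 := by
        intro hs
        have := Real.sin_sq_add_cos_sq θ
        rw [hs, hc] at this; norm_num at this
      refine ⟨P x / Real.sin θ, by field_simp, ?_⟩
      have : Real.sin θ * Q x = 0 := by rw [← hθ, hc]; ring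
      have hQ0 : Q x = 0 := by
        rcases mul_eq_zero.1 this with h | h
        · exact absurd h hs
        · exact h
      rw [hQ0, hc]; ring
    · refine ⟨Q x / Real.cos θ, ?_, by field_simp⟩
      field_simp
      linarith [hθ]
  have ht : t ≠ 0 := by
    intro ht0
    apply hpq
    rw [htP, htQ, ht0]
    norm_num
  have hγΨ : γ = (-t) • Ψ := by
    rw [hγdef, hΨ, htP, htQ]
    module
  -- γ ≠ 0 from linear independence and (P,Q) ≠ 0
  have hγne : γ ≠ 0 := by
    intro h0
    have := hli
    rw [LinearIndependent.pair_iff] at this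
    have h := this (-(Q x)) (P x) (by rw [hγdef] at h0; linear_combination (norm := module) h0)
    apply hpq
    have : P x = 0 ∧ Q x = 0 := ⟨h.2, by linarith [h.1]⟩
    simp [this.1, this.2]
  constructor
  · rw [hγΨ, inner_smul_left, norm_smul]
    simp only [RCLike.star_def, conj_trivial, abs_mul, Real.norm_eq_abs]
    calc |(-t)| * |⟪Ψ, x⟫| ≤ |(-t)| * ((1 - ρ) * ‖Ψ‖ * ‖x‖) := by
          apply mul_le_mul_of_nonneg_left hang (abs_nonneg _)
      _ = (1 - ρ) * (|(-t)| * ‖Ψ‖) * ‖x‖ := by ring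
  · rintro ⟨c, hc⟩
    have hc0 : c ≠ 0 := by
      intro h0; apply hγne; rw [hc, h0, zero_smul]
    have hxn : (0:ℝ) < ‖x‖ := norm_pos_iff.2 hx
    have hin : |⟪γ, x⟫| = |c| * ‖x‖ ^ 2 := by
      rw [hc, real_inner_smul_left, real_inner_self_eq_norm_sq, abs_mul, abs_of_nonneg (by positivity : (0:ℝ) ≤ ‖x‖^2)]
    have hnγ : ‖γ‖ = |c| * ‖x‖ := by rw [hc, norm_smul, Real.norm_eq_abs]
    have hbound : |⟪γ, x⟫| ≤ (1 - ρ) * ‖γ‖ * ‖x‖ := by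
      rw [hγΨ, inner_smul_left, norm_smul]
      simp only [RCLike.star_def, conj_trivial, abs_mul, Real.norm_eq_abs]
      calc |(-t)| * |⟪Ψ, x⟫| ≤ |(-t)| * ((1 - ρ) * ‖Ψ‖ * ‖x‖) := by
            apply mul_le_mul_of_nonneg_left hang (abs_nonneg _)
        _ = (1 - ρ) * (|(-t)| * ‖Ψ‖) * ‖x‖ := by ring
    rw [hin, hnγ] at hbound
    have hcpos : 0 < |c| := abs_pos.2 hc0
    have h2 : ‖x‖ ^ 2 = ‖x‖ * ‖x‖ := sq ‖x‖ ▸ rfl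
    nlinarith [mul_pos (mul_pos hρ0 hcpos) (mul_pos hxn hxn)]
end

section
/- Let ψ = (P,Q) : ℝ^m → ℝ² be differentiable at x with ψ(x) ≠ 0 and x ≠ 0, and let φ(y) = ψ(y)/‖ψ(y)‖ (defined near x). Then the differential of φ at x vanishes on the tangent space {v ∈ ℝ^m : ⟨v, x⟩ = 0} of the sphere through x if and only if γ(x) := P(x)∇Q(x) − Q(x)∇P(x) is a scalar multiple of x. In particular, if γ(x) is not a scalar multiple of x, there exists v with ⟨v, x⟩ = 0 and Dφ(x)(v) ≠ 0. -/
open scoped RealInnerProductSpace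

noncomputable section

/-- `ψ = (P,Q)` as a map into the Euclidean plane. -/
def psiMap {m : ℕ} (P Q : EuclideanSpace ℝ (Fin m) → ℝ) (x : EuclideanSpace ℝ (Fin m)) :
    EuclideanSpace ℝ (Fin 2) :=
  (WithLp.equiv 2 (Fin 2 → ℝ)).symm ![P x, Q x]

/-- Auxiliary scalar computation: the two coordinates of the differential of the normalized
map vanish iff `a * q - b * p = 0`. -/
lemma stmt7_aux_scalar (N a b p q : ℝ) (hN : 0 < N) (hN2 : N ^ 2 = a * a + b * b) :
    (N⁻¹ * p + -(N ^ 2)⁻¹ * (1 / (2 * N) * (a * p + a * p + (b * q + b * q))) * a = 0 ∧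
      N⁻¹ * q + -(N ^ 2)⁻¹ * (1 / (2 * N) * (a * p + a * p + (b * q + b * q))) * b = 0) ↔
    a * q - b * p = 0 := by
  have hN0 : N ≠ 0 := hN.ne'
  have e1 : N⁻¹ * p + -(N ^ 2)⁻¹ * (1 / (2 * N) * (a * p + a * p + (b * q + b * q))) * a
      = (b * (b * p - a * q)) / N ^ 3 := by
    rw [eq_div_iff (by positivity)]
    field_simp
    linear_combination (2 * p) * hN2
  have e2 : N⁻¹ * q + -(N ^ 2)⁻¹ * (1 / (2 * N) * (a * p + a * p + (b * q + b * q))) * b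
      = (a * (a * q - b * p)) / N ^ 3 := by
    rw [eq_div_iff (by positivity)]
    field_simp
    linear_combination (2 * q) * hN2
  rw [e1, e2, div_eq_zero_iff, div_eq_zero_iff]
  have hN3 : N ^ 3 ≠ 0 := by positivity
  simp only [hN3, or_false, mul_eq_zero]
  constructor
  · rintro ⟨h1 | h1, h2 | h2⟩
    · nlinarith [hN2, hN]
    · linarith
    · linarith
    · linarith
  · intro h
    constructor
    · right; linarith
    · right; linarith

/-- Auxiliary orthogonality fact: a linear functional given by inner product with `γ`
vanishes on the orthogonal complement of `x` iff `γ` is a multiple of `x`. -/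
lemma stmt7_aux_orth {m : ℕ} (x γ : EuclideanSpace ℝ (Fin m))
    (f : EuclideanSpace ℝ (Fin m) → ℝ) (hg : ∀ v, ⟪γ, v⟫ = f v) :
    (∀ v, ⟪v, x⟫ = 0 → f v = 0) ↔ ∃ c : ℝ, γ = c • x := by
  constructor
  · intro h
    have hmem : γ ∈ (ℝ ∙ x) := by
      rw [← Submodule.orthogonal_orthogonal (ℝ ∙ x), Submodule.mem_orthogonal]
      intro u hu
      have hux : ⟪u, x⟫ = 0 := Submodule.mem_orthogonal_singleton_iff_inner_left.1 hu
      rw [real_inner_comm, hg u]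
      exact h u hux
    rcases Submodule.mem_span_singleton.1 hmem with ⟨c, hc⟩
    exact ⟨c, hc.symm⟩
  · rintro ⟨c, hc⟩ v hv
    rw [← hg v, hc, real_inner_smul_left, real_inner_comm, hv, mul_zero]

/-- For `ψ = (P,Q)` differentiable at `x` with `ψ(x) ≠ 0` and `x ≠ 0`, and
`φ(y) = ψ(y)/‖ψ(y)‖`, the differential of `φ` at `x` vanishes on the tangent space
`{v : ⟪v, x⟫ = 0}` of the sphere through `x` iff `γ(x) := P(x)∇Q(x) − Q(x)∇P(x)` is a scalar
multiple of `x`; in particular, if `γ(x)` is not a scalar multiple of `x` then there is a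
tangent vector `v` with `Dφ(x)(v) ≠ 0`. -/
theorem stmt_7 {m : ℕ} (P Q : EuclideanSpace ℝ (Fin m) → ℝ) (x : EuclideanSpace ℝ (Fin m))
    (hP : DifferentiableAt ℝ P x) (hQ : DifferentiableAt ℝ Q x)
    (hne : psiMap P Q x ≠ 0) (hx : x ≠ 0) :
    ((∀ v : EuclideanSpace ℝ (Fin m), ⟪v, x⟫ = 0 →
        fderiv ℝ (fun y => ‖psiMap P Q y‖⁻¹ • psiMap P Q y) x v = 0) ↔
      ∃ c : ℝ, P x • gradient Q x - Q x • gradient P x = c • x) ∧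
    ((¬∃ c : ℝ, P x • gradient Q x - Q x • gradient P x = c • x) →
      ∃ v : EuclideanSpace ℝ (Fin m), ⟪v, x⟫ = 0 ∧
        fderiv ℝ (fun y => ‖psiMap P Q y‖⁻¹ • psiMap P Q y) x v ≠ 0) := by
  classical
  have hP' := hP.hasFDerivAt
  have hQ' := hQ.hasFDerivAt
  set a := P x with ha
  set b := Q x with hb
  -- a² + b² > 0
  have hab : 0 < a * a + b * b := by
    rcases lt_or_eq_of_le (by nlinarith [mul_self_nonneg a, mul_self_nonneg b] :
        (0:ℝ) ≤ a * a + b * b) with h | h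
    · exact h
    · exfalso
      have ha0 : a = 0 := by nlinarith
      have hb0 : b = 0 := by nlinarith
      apply hne
      have h0 : ![(0:ℝ), 0] = (0 : Fin 2 → ℝ) := by funext i; fin_cases i <;> rfl
      simp [psiMap, ← ha, ← hb, ha0, hb0, h0, WithLp.equiv_symm_apply, WithLp.toLp_zero]
  set N := Real.sqrt (a * a + b * b) with hNdef
  have hN : 0 < N := Real.sqrt_pos.2 hab
  have hN2 : N ^ 2 = a * a + b * b := Real.sq_sqrt hab.le
  -- the derivative of ψ
  set Dψ : EuclideanSpace ℝ (Fin m) →L[ℝ] EuclideanSpace ℝ (Fin 2) :=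
    (((EuclideanSpace.equiv (Fin 2) ℝ).symm : (Fin 2 → ℝ) →L[ℝ] EuclideanSpace ℝ (Fin 2))).comp
      (ContinuousLinearMap.pi ![fderiv ℝ P x, fderiv ℝ Q x]) with hDψ
  have hψ : HasFDerivAt (psiMap P Q) Dψ x := by
    have h : HasFDerivAt (fun y (i : Fin 2) => (![P, Q] : Fin 2 → _) i y)
        (ContinuousLinearMap.pi ![fderiv ℝ P x, fderiv ℝ Q x]) x := by
      refine hasFDerivAt_pi.2 ?_
      intro i
      fin_cases i
      · exact hP'
      · exact hQ'
    have h2 := (EuclideanSpace.equiv (Fin 2) ℝ).symm.comp_hasFDerivAt_iff.2 h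
    refine h2.congr_of_eventuallyEq (Filter.Eventually.of_forall fun y => ?_)
    simp only [Function.comp]
    have : ![P y, Q y] = fun i => (![P, Q] : Fin 2 → _) i y := by
      funext i; fin_cases i <;> rfl
    rw [psiMap, this]; rfl
  -- the norm function in coordinates
  set n : EuclideanSpace ℝ (Fin m) → ℝ := fun y => Real.sqrt (P y * P y + Q y * Q y) with hndef
  have hnorm : ∀ y, ‖psiMap P Q y‖ = n y := by
    intro y
    rw [EuclideanSpace.norm_eq]
    congr 1
    simp [psiMap, Fin.sum_univ_two, WithLp.equiv_symm_apply, PiLp.toLp_apply, sq_abs]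
    ring
  have hs : HasFDerivAt (fun y => P y * P y + Q y * Q y)
      (a • fderiv ℝ P x + a • fderiv ℝ P x + (b • fderiv ℝ Q x + b • fderiv ℝ Q x)) x :=
    (hP'.mul hP').add (hQ'.mul hQ')
  have hsqrt : HasFDerivAt n
      ((1 / (2 * N)) • (a • fderiv ℝ P x + a • fderiv ℝ P x +
        (b • fderiv ℝ Q x + b • fderiv ℝ Q x))) x :=
    (Real.hasDerivAt_sqrt hab.ne').comp_hasFDerivAt x hs
  have hninv : HasFDerivAt (fun y => (n y)⁻¹)
      ((-(N ^ 2)⁻¹) • ((1 / (2 * N)) • (a • fderiv ℝ P x + a • fderiv ℝ P x +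
        (b • fderiv ℝ Q x + b • fderiv ℝ Q x)))) x :=
    (hasDerivAt_inv hN.ne').comp_hasFDerivAt x hsqrt
  have hφ := hninv.smul hψ
  have hfun : (fun y => ‖psiMap P Q y‖⁻¹ • psiMap P Q y)
      = fun y => (n y)⁻¹ • psiMap P Q y := by
    funext y; rw [hnorm]
  have hnx : n x = N := rfl
  have hfderiv : fderiv ℝ (fun y => ‖psiMap P Q y‖⁻¹ • psiMap P Q y) x
      = ((n x)⁻¹ • Dψ + ((-(N ^ 2)⁻¹) • ((1 / (2 * N)) • (a • fderiv ℝ P x +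
          a • fderiv ℝ P x + (b • fderiv ℝ Q x + b • fderiv ℝ Q x)))).smulRight
            (psiMap P Q x)) := by
    rw [hfun]
    exact hφ.fderiv
  -- pointwise characterization of the vanishing of the differential
  have key : ∀ v : EuclideanSpace ℝ (Fin m),
      (fderiv ℝ (fun y => ‖psiMap P Q y‖⁻¹ • psiMap P Q y) x v = 0 ↔
        a * fderiv ℝ Q x v - b * fderiv ℝ P x v = 0) := by
    intro v
    rw [hfderiv]
    set p := fderiv ℝ P x v with hp
    set q := fderiv ℝ Q x v with hq
    have hcoord : ∀ w : EuclideanSpace ℝ (Fin 2), w = 0 ↔ ∀ i, w i = 0 := by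
      intro w
      constructor
      · intro h i; rw [h]; rfl
      · intro h; ext i; exact h i
    have hD0 : Dψ v 0 = p := rfl
    have hD1 : Dψ v 1 = q := rfl
    have hx0 : psiMap P Q x 0 = a := rfl
    have hx1 : psiMap P Q x 1 = b := rfl
    rw [hcoord, Fin.forall_fin_two]
    simp only [ContinuousLinearMap.add_apply, ContinuousLinearMap.smul_apply,
      ContinuousLinearMap.smulRight_apply, ContinuousLinearMap.coe_smul', Pi.smul_apply,
      PiLp.add_apply, PiLp.smul_apply, smul_eq_mul, hD0, hD1, hx0, hx1, hnx, ← hp, ← hq]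
    exact stmt7_aux_scalar N a b p q hN hN2
  -- inner-product formula for γ
  have hg : ∀ v, ⟪a • gradient Q x - b • gradient P x, v⟫
      = a * fderiv ℝ Q x v - b * fderiv ℝ P x v := by
    intro v
    rw [inner_sub_left, real_inner_smul_left, real_inner_smul_left, gradient, gradient,
      InnerProductSpace.toDual_symm_apply, InnerProductSpace.toDual_symm_apply]
  have horth := stmt7_aux_orth x (a • gradient Q x - b • gradient P x)
    (fun v => a * fderiv ℝ Q x v - b * fderiv ℝ P x v) hg
  have main : (∀ v : EuclideanSpace ℝ (Fin m), ⟪v, x⟫ = 0 →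
      fderiv ℝ (fun y => ‖psiMap P Q y‖⁻¹ • psiMap P Q y) x v = 0) ↔
      ∃ c : ℝ, a • gradient Q x - b • gradient P x = c • x := by
    refine Iff.trans ?_ horth
    exact forall_congr' fun v => imp_congr_right fun _ => key v
  refine ⟨main, ?_⟩
  intro h
  by_contra hcon
  push_neg at hcon
  exact h (main.1 hcon)
end
end

section
/- For all real numbers θ, x, y: if y·cos θ + (x·y² + x³)·sin θ = 0 and x·cos θ − (y·x² + y³)·sin θ = 0, then x = 0 and y = 0. Consequently, for the map ψ(x,y) = (x, y·x² + y³), at every point (x,y) ≠ (0,0) and every θ, the gradient ∇Ψ_θ(x,y) = (cos θ − 2xy·sin θ, −(x² + 3y²)·sin θ) is not a scalar multiple of the position vector (x,y) on the set Ψ_θ = 0. -/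
lemma key (θ x y : ℝ)
    (h1 : y * Real.cos θ + (x * y ^ 2 + x ^ 3) * Real.sin θ = 0)
    (h2 : x * Real.cos θ - (y * x ^ 2 + y ^ 3) * Real.sin θ = 0) :
    x = 0 ∧ y = 0 := by
  have hc : (x ^ 2 + y ^ 2) * Real.cos θ = 0 := by linear_combination y * h1 + x * h2
  have hs : (x ^ 2 + y ^ 2) ^ 2 * Real.sin θ = 0 := by linear_combination x * h1 - y * h2
  have hpy := Real.sin_sq_add_cos_sq θ
  by_cases h : x ^ 2 + y ^ 2 = 0
  · constructor <;> nlinarith [sq_nonneg x, sq_nonneg y]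
  · have hc' : Real.cos θ = 0 := by
      rcases mul_eq_zero.1 hc with h' | h'
      · exact absurd h' h
      · exact h'
    have hs' : Real.sin θ = 0 := by
      rcases mul_eq_zero.1 hs with h' | h'
      · exact absurd (pow_eq_zero_iff (n := 2) (by norm_num) |>.1 h') h
      · exact h'
    nlinarith

/-- For all real `θ, x, y`: if `y·cos θ + (x·y² + x³)·sin θ = 0` and
`x·cos θ − (y·x² + y³)·sin θ = 0`, then `x = 0` and `y = 0`. Consequently, for the map
`ψ(x,y) = (x, y·x² + y³)`, at every `(x,y) ≠ (0,0)` with `Ψ_θ(x,y) = 0`, the gradient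
`∇Ψ_θ(x,y) = (cos θ − 2xy·sin θ, −(x² + 3y²)·sin θ)` is not a scalar multiple of `(x,y)`. -/
theorem stmt_16 :
    (∀ θ x y : ℝ,
      y * Real.cos θ + (x * y ^ 2 + x ^ 3) * Real.sin θ = 0 →
      x * Real.cos θ - (y * x ^ 2 + y ^ 3) * Real.sin θ = 0 →
      x = 0 ∧ y = 0) ∧
    (∀ θ x y : ℝ, (x, y) ≠ (0, 0) →
      Real.cos θ * x - Real.sin θ * (y * x ^ 2 + y ^ 3) = 0 →
      ¬∃ c : ℝ,
        ((Real.cos θ - 2 * x * y * Real.sin θ, -(x ^ 2 + 3 * y ^ 2) * Real.sin θ) : ℝ × ℝ) =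
          c • ((x, y) : ℝ × ℝ)) := by
  refine ⟨key, ?_⟩
  rintro θ x y hne hψ ⟨c, hc⟩
  have h1 : Real.cos θ - 2 * x * y * Real.sin θ = c * x := congrArg Prod.fst hc
  have h2 : -(x ^ 2 + 3 * y ^ 2) * Real.sin θ = c * y := congrArg Prod.snd hc
  have e1 : y * Real.cos θ + (x * y ^ 2 + x ^ 3) * Real.sin θ = 0 := by
    linear_combination y * h1 - x * h2
  have e2 : x * Real.cos θ - (y * x ^ 2 + y ^ 3) * Real.sin θ = 0 := by
    linear_combination hψ
  obtain ⟨hx, hy⟩ := key θ x y e1 e2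
  exact hne (by simp [hx, hy])
end

section
/- Let P(x,y,z) = z·(x² + y² + z²) and Q(x,y,z) = y − x³. For all real numbers θ, λ, x, y, z with λ ≠ 0: if 2xz·cos θ + 3x²·sin θ = λx, and 2yz·cos θ − sin θ = λy, and (x² + y² + 3z²)·cos θ = λz, and cos θ · z(x² + y² + z²) = sin θ · (y − x³), then x = 0, y = 0 and z = 0. (The gradient of the Seade family member Ψ_θ is never a nonzero scalar multiple of the position vector at a nonzero point of Ψ_θ⁻¹(0).) -/
/-- For `P(x,y,z) = z·(x² + y² + z²)` and `Q(x,y,z) = y − x³`, the gradient of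
the Seade family member `Ψ_θ` is never a nonzero scalar multiple of the position vector at a
nonzero point of `Ψ_θ⁻¹(0)`: the displayed system with `λ ≠ 0` has only the trivial
solution. -/
theorem stmt_18 (θ lam x y z : ℝ) (hlam : lam ≠ 0)
    (h1 : 2 * x * z * Real.cos θ + 3 * x ^ 2 * Real.sin θ = lam * x)
    (h2 : 2 * y * z * Real.cos θ - Real.sin θ = lam * y)
    (h3 : (x ^ 2 + y ^ 2 + 3 * z ^ 2) * Real.cos θ = lam * z)
    (h4 : Real.cos θ * (z * (x ^ 2 + y ^ 2 + z ^ 2)) = Real.sin θ * (y - x ^ 3)) :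
    x = 0 ∧ y = 0 ∧ z = 0 := by
  set s := Real.sin θ with hs
  set c := Real.cos θ with hc
  have key : 2 * s * y = lam * (x ^ 2 + y ^ 2 + z ^ 2) := by
    linear_combination x * h1 + y * h2 + z * h3 - 3 * h4
  suffices h : x ^ 2 + y ^ 2 + z ^ 2 = 0 by
    refine ⟨?_, ?_, ?_⟩ <;> nlinarith [sq_nonneg x, sq_nonneg y, sq_nonneg z]
  by_contra hr
  have hr' : 0 < x ^ 2 + y ^ 2 + z ^ 2 := lt_of_le_of_ne (by positivity) (Ne.symm hr)
  have hA : 2 * y * z * c * (x ^ 2 + y ^ 2 + z ^ 2)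
      = s * ((x ^ 2 + y ^ 2 + z ^ 2) + 2 * y ^ 2) := by
    linear_combination (x ^ 2 + y ^ 2 + z ^ 2) * h2 - y * key
  have hB : c * ((x ^ 2 + y ^ 2 + z ^ 2) + 2 * z ^ 2) * (x ^ 2 + y ^ 2 + z ^ 2)
      = 2 * s * y * z := by
    linear_combination (x ^ 2 + y ^ 2 + z ^ 2) * h3 - z * key
  have hcz : c * (x ^ 2 + y ^ 2 + z ^ 2) *
      ((x ^ 2 + y ^ 2 + z ^ 2) ^ 2 + 2 * (x ^ 2 + y ^ 2 + z ^ 2) * y ^ 2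
        + 2 * (x ^ 2 + y ^ 2 + z ^ 2) * z ^ 2) = 0 := by
    linear_combination ((x ^ 2 + y ^ 2 + z ^ 2) + 2 * y ^ 2) * hB - 2 * y * z * hA
  have hc0 : c = 0 := by
    have hpos : 0 < (x ^ 2 + y ^ 2 + z ^ 2) ^ 2 + 2 * (x ^ 2 + y ^ 2 + z ^ 2) * y ^ 2
        + 2 * (x ^ 2 + y ^ 2 + z ^ 2) * z ^ 2 := by positivity
    have := mul_eq_zero.mp hcz
    rcases this with h | h
    · rcases mul_eq_zero.mp h with h' | h'
      · exact h'
      · exact absurd h' hr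
    · exact absurd h (ne_of_gt hpos)
  have hz : z = 0 := by
    have : lam * z = 0 := by rw [← h3, hc0]; ring
    rcases mul_eq_zero.mp this with h | h
    · exact absurd h hlam
    · exact h
  have hs' : s = -(lam * y) := by
    rw [hz] at h2; rw [hc0] at h2; linarith
  have hfin : lam * (x ^ 2 + 3 * y ^ 2) = 0 := by
    rw [hz, hs'] at key
    linear_combination -key
  rcases mul_eq_zero.mp hfin with h | h
  · exact absurd h hlam
  · nlinarith [hr', h, sq_nonneg y]
end
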